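/- Let {(σ_n, v_n, u_n)}_{n∈ℕ} be a singular system for the compact linear operator K : X → Y. For every x in the closed linear span of {v_n : n ∈ ℕ}, the ℓ¹-SVD reconstruction of the exact data K x converges to x as the regularization parameter tends to zero: ‖ ∑_n (1/σ_n²) S_α(σ_n ⟨K x, u_n⟩) v_n − x ‖ → 0 as α → 0⁺. -/

import Mathlib

open scoped InnerProductSpace Topology

/-- The soft thresholding function `S_α`. -/
noncomputable def softThresh (α t : ℝ) : ℝ :=
  if t ≤ -(α / 2) then t + α / 2
  else if α / 2 ≤ t then t - α / 2
  else 0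

lemma abs_softThresh_sub_le_half {α t : ℝ} (hα : 0 ≤ α) :
    |softThresh α t - t| ≤ α / 2 := by
  unfold softThresh
  split_ifs with h1 h2 <;>
    (rcases abs_cases t with ⟨h, h'⟩ | ⟨h, h'⟩ <;> rw [abs_le] <;> constructor <;> linarith)

lemma abs_softThresh_sub_le_abs {α t : ℝ} (hα : 0 ≤ α) :
    |softThresh α t - t| ≤ |t| := by
  unfold softThresh
  split_ifs with h1 h2 <;>
    (rcases abs_cases t with ⟨h, h'⟩ | ⟨h, h'⟩ <;> rw [abs_le] <;> constructor <;> linarith)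

/-- For every `x` in the closed linear span of the right singular vectors `v n`, the
`ℓ¹`-SVD reconstruction of the exact data `K x` converges to `x` as `α → 0⁺`. -/
theorem l1SVD_convergence {X Y : Type*}
    [NormedAddCommGroup X] [InnerProductSpace ℝ X] [CompleteSpace X]
    [NormedAddCommGroup Y] [InnerProductSpace ℝ Y] [CompleteSpace Y]
    (K : X →L[ℝ] Y) (hK : IsCompactOperator K)
    (σ : ℕ → ℝ) (v : ℕ → X) (u : ℕ → Y)
    (hσ : ∀ n, 0 < σ n) (hv : Orthonormal ℝ v) (hu : Orthonormal ℝ u)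
    (hKv : ∀ n, K (v n) = σ n • u n)
    (hKadj : ∀ n, (ContinuousLinearMap.adjoint K) (u n) = σ n • v n)
    (x : X) (hx : x ∈ (Submodule.span ℝ (Set.range v)).topologicalClosure) :
    Filter.Tendsto
      (fun α : ℝ =>
        ‖(∑' n, ((σ n ^ 2)⁻¹ * softThresh α (σ n * ⟪K x, u n⟫_ℝ)) • v n) - x‖)
      (𝓝[>] 0) (𝓝 0) := by
  set S := (Submodule.span ℝ (Set.range v)).topologicalClosure with hSdef
  haveI : CompleteSpace S :=
    (Submodule.isClosed_topologicalClosure _).completeSpace_coe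
  have hvS : ∀ n, v n ∈ S := fun n =>
    Submodule.le_topologicalClosure _ (Submodule.subset_span ⟨n, rfl⟩)
  set v' : ℕ → S := fun n => ⟨v n, hvS n⟩ with hv'def
  have hv'on : Orthonormal ℝ v' := by
    rw [orthonormal_iff_ite] at hv ⊢
    intro i j
    simpa [Submodule.coe_inner] using hv i j
  have hmap : Submodule.map S.subtype (Submodule.span ℝ (Set.range v'))
      = Submodule.span ℝ (Set.range v) := by
    rw [Submodule.map_span]
    congr 1
    ext y
    constructor
    · rintro ⟨z, ⟨n, rfl⟩, rfl⟩; exact ⟨n, rfl⟩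
    · rintro ⟨n, rfl⟩; exact ⟨v' n, ⟨n, rfl⟩, rfl⟩
  have hsp : ⊤ ≤ (Submodule.span ℝ (Set.range v')).topologicalClosure := by
    rintro ⟨s, hs⟩ -
    have h1 : (⟨s, hs⟩ : S) ∈ closure ((Submodule.span ℝ (Set.range v') : Set S)) := by
      rw [closure_subtype]
      have : (Subtype.val '' (Submodule.span ℝ (Set.range v') : Set S))
          = (Submodule.span ℝ (Set.range v) : Set X) := by
        rw [← hmap]; rfl
      rw [this]
      exact hs
    exact h1
  set b : HilbertBasis ℕ ℝ S := HilbertBasis.mk hv'on hsp with hbdef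
  have hb : ⇑b = v' := HilbertBasis.coe_mk hv'on hsp
  have hbn : ∀ (inst : DecidableEq ℕ) (n : ℕ),
      b.repr.symm (@lp.single ℕ (fun _ => ℝ) _ inst 2 n 1) = v' n := by
    intro inst n
    have h := congrFun hb n
    convert h using 2
    exact b.repr_symm_single n
  set a : ℕ → ℝ := fun n => ⟪v n, x⟫_ℝ with hadef
  -- inner product identity
  have hinner : ∀ n, σ n * ⟪K x, u n⟫_ℝ = σ n ^ 2 * a n := by
    intro n
    have h1 : ⟪K x, u n⟫_ℝ = ⟪x, (ContinuousLinearMap.adjoint K) (u n)⟫_ℝ := by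
      rw [ContinuousLinearMap.adjoint_inner_right]
    rw [h1, hKadj n, real_inner_smul_right, ← real_inner_comm x (v n)]
    simp only [hadef]
    ring
  -- x is the sum of its coefficients
  have hxS : HasSum (fun n => a n • v n) x := by
    have h0 := b.hasSum_repr ⟨x, hx⟩
    have h1 : HasSum (fun n => a n • v' n) (⟨x, hx⟩ : S) := by
      have hfun : (fun n => b.repr ⟨x, hx⟩ n • b n) = fun n => a n • v' n := by
        funext n
        rw [b.repr_apply_apply]
        beta_reduce
        rw [congrFun hb n]
        congr 1
      rw [hfun] at h0
      exact h0
    have h2 := h1.mapL S.subtypeL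
    simpa using h2
  have ha2 : Summable fun n => a n ^ 2 := by
    have := hv.inner_products_summable x
    simpa [hadef, sq_abs] using this
  -- coefficients
  set c : ℝ → ℕ → ℝ := fun α n => (σ n ^ 2)⁻¹ * softThresh α (σ n ^ 2 * a n) with hcdef
  set d : ℝ → ℕ → ℝ := fun α n => c α n - a n with hddef
  have hσ2 : ∀ n, (σ n ^ 2 : ℝ) ≠ 0 := fun n => pow_ne_zero 2 (hσ n).ne'
  have hσ2p : ∀ n, (0:ℝ) < σ n ^ 2 := fun n => pow_pos (hσ n) 2
  have hd_eq : ∀ α n,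
      d α n = (σ n ^ 2)⁻¹ * (softThresh α (σ n ^ 2 * a n) - σ n ^ 2 * a n) := by
    intro α n
    simp only [hddef, hcdef]
    rw [mul_sub, inv_mul_cancel_left₀ (hσ2 n)]
  have hd_abs_le_a : ∀ α n, 0 ≤ α → |d α n| ≤ |a n| := by
    intro α n hα
    rw [hd_eq, abs_mul, abs_of_nonneg (inv_nonneg.2 (hσ2p n).le)]
    calc (σ n ^ 2)⁻¹ * |softThresh α (σ n ^ 2 * a n) - σ n ^ 2 * a n|
        ≤ (σ n ^ 2)⁻¹ * |σ n ^ 2 * a n| :=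
          mul_le_mul_of_nonneg_left (abs_softThresh_sub_le_abs hα)
            (inv_nonneg.2 (hσ2p n).le)
      _ = |a n| := by
          rw [abs_mul, abs_of_nonneg (hσ2p n).le, inv_mul_cancel_left₀ (hσ2 n)]
  have hd_abs_le_half : ∀ α n, 0 ≤ α → |d α n| ≤ (σ n ^ 2)⁻¹ * (α / 2) := by
    intro α n hα
    rw [hd_eq, abs_mul, abs_of_nonneg (inv_nonneg.2 (hσ2p n).le)]
    exact mul_le_mul_of_nonneg_left (abs_softThresh_sub_le_half hα)
      (inv_nonneg.2 (hσ2p n).le)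
  -- tsum of squares tends to zero
  have htsum : Filter.Tendsto (fun α => ∑' n, d α n ^ 2) (𝓝[>] (0:ℝ)) (𝓝 0) := by
    have H := tendsto_tsum_of_dominated_convergence (𝓕 := 𝓝[>] (0:ℝ))
      (f := fun α n => d α n ^ 2) (g := fun _ => (0:ℝ)) (bound := fun n => a n ^ 2)
      ha2 ?_ ?_
    · simpa using H
    · intro n
      apply squeeze_zero' (Filter.Eventually.of_forall fun α => by positivity)
      · filter_upwards [self_mem_nhdsWithin] with α (hα : (0:ℝ) < α)
        calc d α n ^ 2 = |d α n| ^ 2 := (sq_abs _).symm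
          _ ≤ ((σ n ^ 2)⁻¹ * (α / 2)) ^ 2 :=
              pow_le_pow_left₀ (abs_nonneg _) (hd_abs_le_half α n hα.le) 2
      · have hc : Continuous fun α : ℝ => ((σ n ^ 2)⁻¹ * (α / 2)) ^ 2 :=
          ((continuous_const.mul (continuous_id.div_const 2)).pow 2)
        exact (hc.tendsto' 0 0 (by norm_num)).mono_left nhdsWithin_le_nhds
    · filter_upwards [self_mem_nhdsWithin] with α (hα : (0:ℝ) < α)
      intro n
      calc ‖d α n ^ 2‖ = |d α n| ^ 2 := by rw [Real.norm_eq_abs, abs_pow]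
        _ ≤ |a n| ^ 2 := pow_le_pow_left₀ (abs_nonneg _) (hd_abs_le_a α n hα.le) 2
        _ = a n ^ 2 := sq_abs _
  -- identify the norm with the sqrt of the tsum of squares, for α > 0
  have key : ∀ α : ℝ, 0 < α →
      ‖(∑' n, ((σ n ^ 2)⁻¹ * softThresh α (σ n * ⟪K x, u n⟫_ℝ)) • v n) - x‖
        = Real.sqrt (∑' n, d α n ^ 2) := by
    intro α hα
    have hsq_sum : Summable fun n => (d α n) ^ 2 :=
      ha2.of_nonneg_of_le (fun n => by positivity)
        (fun n => by
          calc d α n ^ 2 = |d α n| ^ 2 := (sq_abs _).symm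
            _ ≤ |a n| ^ 2 := pow_le_pow_left₀ (abs_nonneg _) (hd_abs_le_a α n hα.le) 2
            _ = a n ^ 2 := sq_abs _)
    have hmem : Memℓp (d α) 2 := by
      apply memℓp_gen
      convert hsq_sum using 2 with n
      rw [ENNReal.toReal_ofNat, Real.norm_eq_abs, Real.rpow_two, sq_abs]
    set f : lp (fun _ : ℕ => ℝ) 2 := ⟨d α, hmem⟩ with hfdef
    have hsumd : HasSum (fun n => d α n • v n) ((b.repr.symm f : S) : X) := by
      have h1 := b.hasSum_repr_symm f
      have h2 := h1.mapL S.subtypeL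
      refine h2.congr_fun fun n => ?_
      simp only [ContinuousLinearMap.coe_coe, Submodule.coe_subtypeL,
        Submodule.coe_subtype]
      beta_reduce
      rw [congrFun hb n]
      simp [hfdef, v']
    have hsumc : HasSum (fun n => c α n • v n) (x + ((b.repr.symm f : S) : X)) := by
      have h5 := hxS.add hsumd
      refine h5.congr_fun fun n => ?_
      rw [← add_smul]
      congr 1
      simp [hddef]
    have htsum_eq : (∑' n, ((σ n ^ 2)⁻¹ * softThresh α (σ n * ⟪K x, u n⟫_ℝ)) • v n)
        = x + ((b.repr.symm f : S) : X) := by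
      rw [show (fun n => ((σ n ^ 2)⁻¹ * softThresh α (σ n * ⟪K x, u n⟫_ℝ)) • v n)
            = fun n => c α n • v n from funext fun n => by rw [hinner n]]
      exact hsumc.tsum_eq
    rw [htsum_eq]
    have h6 : x + ((b.repr.symm f : S) : X) - x = ((b.repr.symm f : S) : X) := by abel
    rw [h6]
    have hnorm : ‖((b.repr.symm f : S) : X)‖ = ‖f‖ := by
      rw [← Submodule.coe_norm, b.repr.symm.norm_map]
    rw [hnorm]
    have hnf : ‖f‖ ^ (2:ℝ) = ∑' n, ‖d α n‖ ^ (2:ℝ) := by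
      have h7 := lp.norm_rpow_eq_tsum (p := 2) (by norm_num) f
      simpa using h7
    have hsq : ‖f‖ ^ (2:ℕ) = ∑' n, d α n ^ 2 := by
      rw [← Real.rpow_two, hnf]
      congr 1
      ext n
      rw [Real.norm_eq_abs, Real.rpow_two, sq_abs]
    rw [← hsq, Real.sqrt_sq (norm_nonneg f)]
  -- conclude
  have hcongr : (fun α : ℝ =>
      ‖(∑' n, ((σ n ^ 2)⁻¹ * softThresh α (σ n * ⟪K x, u n⟫_ℝ)) • v n) - x‖)
      =ᶠ[𝓝[>] (0:ℝ)] fun α => Real.sqrt (∑' n, d α n ^ 2) := by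
    filter_upwards [self_mem_nhdsWithin] with α (hα : (0:ℝ) < α)
    exact key α hα
  rw [Filter.tendsto_congr' hcongr]
  have hs : Filter.Tendsto Real.sqrt (𝓝 0) (𝓝 0) := by
    have h8 := Real.continuous_sqrt.tendsto 0
    simpa using h8
  exact hs.comp htsum
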